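/- Let $\beta > 1$, $\alpha \in \left(0, \frac{\beta - 1}{\beta + 1}\right)$, and let $h : [r_0,\infty) \to [1, \infty)$ be nondecreasing, $p_0 : [r_0,\infty) \to (0,\infty)$ nonincreasing with $p_0(r) \leq 1/r$, and $f : [r_0,\infty) \to [r_0,\infty)$ satisfy $f(r) \geq \max(r, (p_0 h)(r)^{\beta})$. Then the function $r \mapsto h(r)^{\alpha} (p_0 h)(r) \, p_0(f(r))$ is bounded on $[r_0, \infty)$. -/

import Mathlib

theorem bounded_key_estimate (β α r0 : ℝ) (hβ : 1 < β)
    (hα : α ∈ Set.Ioo (0:ℝ) ((β - 1) / (β + 1)))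
    (h p0 f : ℝ → ℝ)
    (hh1 : ∀ r ≥ r0, 1 ≤ h r) (hhmono : MonotoneOn h (Set.Ici r0))
    (hp0pos : ∀ r ≥ r0, 0 < p0 r) (hp0anti : AntitoneOn p0 (Set.Ici r0))
    (hp0le : ∀ r ≥ r0, p0 r ≤ 1 / r)
    (hfmaps : ∀ r ≥ r0, f r ∈ Set.Ici r0)
    (hfge : ∀ r ≥ r0, f r ≥ max r ((p0 r * h r) ^ β)) :
    ∃ C : ℝ, ∀ r ≥ r0, h r ^ α * (p0 r * h r) * p0 (f r) ≤ C := by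
  obtain ⟨hα0, hα1⟩ := hα
  refine ⟨1, fun r hr => ?_⟩
  have hβ1 : (0:ℝ) < β - 1 := by linarith
  have hP : 0 < p0 r := hp0pos r hr
  have hH : 1 ≤ h r := hh1 r hr
  have hHpos : (0:ℝ) < h r := lt_of_lt_of_le one_pos hH
  set x := p0 r * h r with hxdef
  have hx : 0 < x := mul_pos hP hHpos
  have hfr : f r ∈ Set.Ici r0 := hfmaps r hr
  have hge := hfge r hr
  have hfr_ge_x : x ^ β ≤ f r := le_trans (le_max_right _ _) hge
  have hfr_ge_r : r ≤ f r := le_trans (le_max_left _ _) hge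
  have hxb : 0 < x ^ β := Real.rpow_pos_of_pos hx β
  have hpf_pos : 0 < p0 (f r) := hp0pos _ hfr
  have hHα : 0 < h r ^ α := Real.rpow_pos_of_pos hHpos α
  rcases le_or_gt (h r ^ α) (x ^ (β - 1)) with hcase | hcase
  · -- use p0 (f r) ≤ 1 / f r ≤ x ^ (-β)
    have hpf1 : p0 (f r) ≤ x ^ (-β) := by
      have h1 : p0 (f r) ≤ 1 / f r := hp0le _ hfr
      have h2 : (1:ℝ) / f r ≤ 1 / x ^ β := one_div_le_one_div_of_le hxb hfr_ge_x
      calc p0 (f r) ≤ 1 / x ^ β := le_trans h1 h2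
        _ = x ^ (-β) := by rw [Real.rpow_neg hx.le, one_div]
    have step1 : h r ^ α * x * p0 (f r) ≤ x ^ (β - 1) * x * x ^ (-β) := by
      have := mul_le_mul hcase (le_refl x) hx.le (Real.rpow_nonneg hx.le _)
      exact mul_le_mul this hpf1 hpf_pos.le (by positivity)
    refine step1.trans ?_
    have : x ^ (β - 1) * x * x ^ (-β) = x ^ ((β - 1) + 1 + (-β)) := by
      rw [Real.rpow_add hx, Real.rpow_add hx, Real.rpow_one]
    rw [this]
    norm_num
  · -- x ^ (β-1) < h^α  ⇒  x ≤ h ^ (α/(β-1))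
    set e : ℝ := α / (β - 1) with hedef
    have hxle : x ≤ h r ^ e := by
      have h1 : (x ^ (β - 1)) ^ ((β - 1)⁻¹) ≤ (h r ^ α) ^ ((β - 1)⁻¹) :=
        Real.rpow_le_rpow (Real.rpow_nonneg hx.le _) hcase.le (by positivity)
      rw [← Real.rpow_mul hx.le, ← Real.rpow_mul hHpos.le,
        mul_inv_cancel₀ hβ1.ne', Real.rpow_one] at h1
      rwa [hedef, div_eq_mul_inv]
    have hp0r : p0 r ≤ h r ^ e / h r := by
      have hxh : p0 r = x / h r := by rw [hxdef, mul_div_assoc, div_self hHpos.ne', mul_one]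
      rw [hxh]
      gcongr
    have hpf2 : p0 (f r) ≤ p0 r := hp0anti hr hfr hfr_ge_r
    have step1 : h r ^ α * x * p0 (f r) ≤ h r ^ α * h r ^ e * (h r ^ e / h r) := by
      have hmid : h r ^ α * x ≤ h r ^ α * h r ^ e :=
        mul_le_mul_of_nonneg_left hxle hHα.le
      exact mul_le_mul hmid (hpf2.trans hp0r) hpf_pos.le (by positivity)
    refine step1.trans ?_
    have heq : h r ^ α * h r ^ e * (h r ^ e / h r) = h r ^ (α + e + (e - 1)) := by
      rw [Real.rpow_add hHpos, Real.rpow_add hHpos, Real.rpow_sub hHpos, Real.rpow_one]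
    rw [heq]
    apply Real.rpow_le_one_of_one_le_of_nonpos hH
    -- α + e + (e - 1) ≤ 0  ⟺  α(β+1) ≤ β-1
    have hαβ : α * (β + 1) ≤ β - 1 :=
      ((lt_div_iff₀ (by linarith : (0:ℝ) < β + 1)).mp hα1).le
    have ht : e * (β - 1) = α := div_mul_cancel₀ α hβ1.ne'
    nlinarith [ht, hαβ]
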